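/- arXiv:1106.4655 — 4 statements merged into one kernel-verified Lean document; each statement's English description precedes it below -/
import Mathlib

section
/- Let (X, μ) be a probability space with a measure-preserving action, let T_i, T_j be sequences of measure-preserving automorphisms and S a measure-preserving automorphism such that T_i^{-1} S T_i → Id and T_j^{-1} S T_j → Id (in the sense that μ(A Δ T_i^{-1}ST_i A) → 0 for all measurable A). Suppose a measure ν on X × X × X satisfies μ(A ∩ T_i B ∩ T_j C) → ν(A × B × C) for all measurable A, B, C. Then ν(SA × B × C) = ν(A × B × C). -/
open MeasureTheory Filter Set
open scoped symmDiff ENNReal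

private lemma aux_subset {X : Type*} (W P P' Q Q' : Set X) :
    W ∩ P ∩ Q ⊆ (W ∩ P' ∩ Q') ∪ ((P ∆ P') ∪ (Q ∆ Q')) := by
  intro x hx
  obtain ⟨⟨hW, hP⟩, hQ⟩ := hx
  by_cases hP' : x ∈ P'
  · by_cases hQ' : x ∈ Q'
    · exact Or.inl ⟨⟨hW, hP'⟩, hQ'⟩
    · exact Or.inr (Or.inr (Or.inl ⟨hQ, hQ'⟩))
  · exact Or.inr (Or.inl (Or.inl ⟨hP, hP'⟩))

private lemma aux_meas {X : Type*} [MeasurableSpace X] (μ : Measure X)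
    (W P P' Q Q' : Set X) :
    μ (W ∩ P ∩ Q) ≤ μ (W ∩ P' ∩ Q') + (μ (P ∆ P') + μ (Q ∆ Q')) :=
  (measure_mono (aux_subset W P P' Q Q')).trans
    ((measure_union_le _ _).trans (by gcongr; exact measure_union_le _ _))

/-- Let `T_i`, `T_j` be sequences of measure-preserving
automorphisms of a probability space and `S` a measure-preserving automorphism
with `T_i⁻¹ S T_i → Id` and `T_j⁻¹ S T_j → Id` (weakly).  If a measure `ν` on
`X³` satisfies `μ(A ∩ T_i B ∩ T_j C) → ν(A × B × C)`, then
`ν(SA × B × C) = ν(A × B × C)`. -/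
theorem stmt10 {X : Type*} [MeasurableSpace X] (μ : Measure X)
    [IsProbabilityMeasure μ]
    (Ti Tj : ℕ → X ≃ᵐ X)
    (hTi : ∀ n, MeasurePreserving (Ti n) μ μ) (hTj : ∀ n, MeasurePreserving (Tj n) μ μ)
    (S : X ≃ᵐ X) (hS : MeasurePreserving S μ μ)
    (h1 : ∀ A : Set X, MeasurableSet A →
      Tendsto (fun n => μ (A ∆ ((fun x => (Ti n).symm (S (Ti n x))) '' A))) atTop (nhds 0))
    (h2 : ∀ A : Set X, MeasurableSet A →
      Tendsto (fun n => μ (A ∆ ((fun x => (Tj n).symm (S (Tj n x))) '' A))) atTop (nhds 0))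
    (ν : Measure (X × X × X))
    (hlim : ∀ A B C : Set X, MeasurableSet A → MeasurableSet B → MeasurableSet C →
      Tendsto (fun p : ℕ × ℕ => μ (A ∩ (Ti p.1) '' B ∩ (Tj p.2) '' C))
        (atTop ×ˢ atTop) (nhds (ν (A ×ˢ B ×ˢ C)))) :
    ∀ A B C : Set X, MeasurableSet A → MeasurableSet B → MeasurableSet C →
      ν ((S '' A) ×ˢ B ×ˢ C) = ν (A ×ˢ B ×ˢ C) := by
  intro A B C hA hB hC
  have himg : ∀ (e : X ≃ᵐ X), MeasurePreserving e μ μ → ∀ s : Set X,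
      μ (e '' s) = μ s := by
    intro e he s
    rw [show e '' s = e.symm ⁻¹' s from (e.image_eq_preimage_symm s)]
    exact (he.symm e).measure_preimage_emb e.symm.measurableEmbedding s
  set φ : ℕ → X → X := fun n x => (Ti n).symm (S (Ti n x)) with hφ
  set ψ : ℕ → X → X := fun n x => (Tj n).symm (S (Tj n x)) with hψ
  have hSA : MeasurableSet (S '' A) := S.measurableSet_image.2 hA
  have hf := hlim (S '' A) B C hSA hB hC
  have hg := hlim A B C hA hB hC
  -- the error term
  set h : ℕ × ℕ → ℝ≥0∞ := fun p => μ (B ∆ (φ p.1 '' B)) + μ (C ∆ (ψ p.2 '' C)) with hh_def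
  have hh : Tendsto h (atTop ×ˢ atTop) (nhds 0) := by
    have t1 : Tendsto (fun p : ℕ × ℕ => μ (B ∆ (φ p.1 '' B))) (atTop ×ˢ atTop) (nhds 0) :=
      (h1 B hB).comp tendsto_fst
    have t2 : Tendsto (fun p : ℕ × ℕ => μ (C ∆ (ψ p.2 '' C))) (atTop ×ˢ atTop) (nhds 0) :=
      (h2 C hC).comp tendsto_snd
    simpa using t1.add t2
  -- rewriting g p
  have key : ∀ p : ℕ × ℕ, μ (A ∩ (Ti p.1) '' B ∩ (Tj p.2) '' C)
      = μ ((S '' A) ∩ (Ti p.1) '' (φ p.1 '' B) ∩ (Tj p.2) '' (ψ p.2 '' C)) := by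
    intro p
    have h1' : (Ti p.1) '' (φ p.1 '' B) = S '' ((Ti p.1) '' B) := by
      rw [← image_comp, ← image_comp]
      ext x
      simp [hφ]
    have h2' : (Tj p.2) '' (ψ p.2 '' C) = S '' ((Tj p.2) '' C) := by
      rw [← image_comp, ← image_comp]
      ext x
      simp [hψ]
    rw [h1', h2', ← image_inter S.injective, ← image_inter S.injective,
      himg S hS]
  -- symmdiff measures
  have hsd1 : ∀ p : ℕ × ℕ, μ ((Ti p.1 '' B) ∆ (Ti p.1 '' (φ p.1 '' B))) = μ (B ∆ (φ p.1 '' B)) := by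
    intro p
    rw [← image_symmDiff (Ti p.1).injective, himg _ (hTi p.1)]
  have hsd2 : ∀ p : ℕ × ℕ, μ ((Tj p.2 '' C) ∆ (Tj p.2 '' (ψ p.2 '' C))) = μ (C ∆ (ψ p.2 '' C)) := by
    intro p
    rw [← image_symmDiff (Tj p.2).injective, himg _ (hTj p.2)]
  -- inequalities
  have hle1 : ∀ p : ℕ × ℕ, μ ((S '' A) ∩ (Ti p.1) '' B ∩ (Tj p.2) '' C)
      ≤ μ (A ∩ (Ti p.1) '' B ∩ (Tj p.2) '' C) + h p := by
    intro p
    rw [key p, hh_def]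
    have := aux_meas μ (S '' A) (Ti p.1 '' B) (Ti p.1 '' (φ p.1 '' B))
      (Tj p.2 '' C) (Tj p.2 '' (ψ p.2 '' C))
    rwa [hsd1 p, hsd2 p] at this
  have hle2 : ∀ p : ℕ × ℕ, μ (A ∩ (Ti p.1) '' B ∩ (Tj p.2) '' C)
      ≤ μ ((S '' A) ∩ (Ti p.1) '' B ∩ (Tj p.2) '' C) + h p := by
    intro p
    rw [key p, hh_def]
    have := aux_meas μ (S '' A) (Ti p.1 '' (φ p.1 '' B)) (Ti p.1 '' B)
      (Tj p.2 '' (ψ p.2 '' C)) (Tj p.2 '' C)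
    rwa [symmDiff_comm (Ti p.1 '' (φ p.1 '' B)), symmDiff_comm (Tj p.2 '' (ψ p.2 '' C)),
      hsd1 p, hsd2 p] at this
  have hle : ν ((S '' A) ×ˢ B ×ˢ C) ≤ ν (A ×ˢ B ×ˢ C) := by
    have : Tendsto (fun p : ℕ × ℕ => μ (A ∩ (Ti p.1) '' B ∩ (Tj p.2) '' C) + h p)
        (atTop ×ˢ atTop) (nhds (ν (A ×ˢ B ×ˢ C))) := by
      simpa using hg.add hh
    exact le_of_tendsto_of_tendsto' hf this hle1
  have hge : ν (A ×ˢ B ×ˢ C) ≤ ν ((S '' A) ×ˢ B ×ˢ C) := by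
    have : Tendsto (fun p : ℕ × ℕ => μ ((S '' A) ∩ (Ti p.1) '' B ∩ (Tj p.2) '' C) + h p)
        (atTop ×ˢ atTop) (nhds (ν ((S '' A) ×ˢ B ×ˢ C))) := by
      simpa using hf.add hh
    exact le_of_tendsto_of_tendsto' hg this hle2
  exact le_antisymm hle hge
end

section
/- Under the hypotheses of the previous lemma, suppose additionally that ν(X × B × C) = μ(B)μ(C) for all measurable B, C, and that the collection of all automorphisms S satisfying T_i^{-1}ST_i → Id and T_j^{-1}ST_j → Id generates an ergodic action. Then ν = μ × μ × μ. -/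
open MeasureTheory Filter Set
open scoped symmDiff ENNReal

/-- Helper: perturbing two of the sets in a triple intersection changes the measure
by at most the measures of the symmetric differences. -/
lemma stmt11_aux_inter_le {X : Type*} [MeasurableSpace X] (μ : Measure X)
    (A U V U' V' : Set X) :
    μ (A ∩ U' ∩ V') ≤ μ (A ∩ U ∩ V) + (μ (U' ∆ U) + μ (V' ∆ V)) := by
  have hsub : A ∩ U' ∩ V' ⊆ (A ∩ U ∩ V) ∪ ((U' ∆ U) ∪ (V' ∆ V)) := by
    rintro x ⟨⟨hA, hU'⟩, hV'⟩
    by_cases hU : x ∈ U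
    · by_cases hV : x ∈ V
      · exact Or.inl ⟨⟨hA, hU⟩, hV⟩
      · exact Or.inr (Or.inr (Set.mem_symmDiff.mpr (Or.inl ⟨hV', hV⟩)))
    · exact Or.inr (Or.inl (Set.mem_symmDiff.mpr (Or.inl ⟨hU', hU⟩)))
  calc μ (A ∩ U' ∩ V') ≤ μ ((A ∩ U ∩ V) ∪ ((U' ∆ U) ∪ (V' ∆ V))) := measure_mono hsub
    _ ≤ μ (A ∩ U ∩ V) + μ ((U' ∆ U) ∪ (V' ∆ V)) := measure_union_le _ _
    _ ≤ μ (A ∩ U ∩ V) + (μ (U' ∆ U) + μ (V' ∆ V)) :=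
        add_le_add_right (measure_union_le _ _) _

/-- Under the hypotheses of the previous lemma, if moreover
`ν(X × B × C) = μ(B)μ(C)` for all `B, C` and the collection of all automorphisms
`S` with `T_i⁻¹ S T_i → Id`, `T_j⁻¹ S T_j → Id` generates an ergodic action, then
`ν = μ × μ × μ`. -/
theorem stmt11 {X : Type*} [MeasurableSpace X] (μ : Measure X)
    [IsProbabilityMeasure μ]
    (Ti Tj : ℕ → X ≃ᵐ X)
    (hTi : ∀ n, MeasurePreserving (Ti n) μ μ) (hTj : ∀ n, MeasurePreserving (Tj n) μ μ)
    (ν : Measure (X × X × X))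
    (hlim : ∀ A B C : Set X, MeasurableSet A → MeasurableSet B → MeasurableSet C →
      Tendsto (fun p : ℕ × ℕ => μ (A ∩ (Ti p.1) '' B ∩ (Tj p.2) '' C))
        (atTop ×ˢ atTop) (nhds (ν (A ×ˢ B ×ˢ C))))
    (hprod : ∀ B C : Set X, MeasurableSet B → MeasurableSet C →
      ν (univ ×ˢ B ×ˢ C) = μ B * μ C)
    -- the homoclinic automorphisms (those satisfying condition (1)) generate an
    -- ergodic action
    (herg : ∀ A : Set X, MeasurableSet A →
      (∀ S : X ≃ᵐ X, MeasurePreserving S μ μ →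
        (∀ D : Set X, MeasurableSet D →
          Tendsto (fun n => μ (D ∆ ((fun x => (Ti n).symm (S (Ti n x))) '' D))) atTop (nhds 0)) →
        (∀ D : Set X, MeasurableSet D →
          Tendsto (fun n => μ (D ∆ ((fun x => (Tj n).symm (S (Tj n x))) '' D))) atTop (nhds 0)) →
        μ ((S '' A) ∆ A) = 0) →
      μ A = 0 ∨ μ A = 1) :
    ν = μ.prod (μ.prod μ) := by
  haveI : IsProbabilityMeasure ν := by
    constructor
    have h := hprod univ univ MeasurableSet.univ MeasurableSet.univ
    simpa [Set.univ_prod_univ] using h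
  -- the main computation on rectangles
  have key : ∀ A B C : Set X, MeasurableSet A → MeasurableSet B → MeasurableSet C →
      ν (A ×ˢ B ×ˢ C) = μ A * (μ B * μ C) := by
    intro A B C hA hB hC
    set c : ℝ≥0∞ := μ B * μ C with hc
    have hcne : c ≠ ⊤ := ENNReal.mul_ne_top (measure_ne_top μ B) (measure_ne_top μ C)
    -- the fiber measure in the first coordinate
    set ρ : Measure X := Measure.map Prod.fst (ν.restrict ((univ : Set X) ×ˢ B ×ˢ C))
      with hρdef
    have hρ : ∀ D : Set X, MeasurableSet D → ρ D = ν (D ×ˢ B ×ˢ C) := by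
      intro D hD
      rw [hρdef, Measure.map_apply measurable_fst hD,
        Measure.restrict_apply (measurable_fst hD)]
      congr 1
      ext ⟨x, y, z⟩
      simp [Set.mem_prod]
    have hρle : ∀ D : Set X, MeasurableSet D → ρ D ≤ μ D := by
      intro D hD
      rw [hρ D hD]
      refine le_of_tendsto (hlim D B C hD hB hC) (Eventually.of_forall fun p => ?_)
      exact measure_mono fun x hx => hx.1.1
    have hρac : ρ ≪ μ := by
      refine Measure.AbsolutelyContinuous.mk fun s hs h0 => ?_
      exact le_antisymm (by rw [← h0]; exact hρle s hs) zero_le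
    haveI : IsFiniteMeasure ρ := by
      constructor
      rw [hρ univ MeasurableSet.univ]
      exact measure_lt_top ν _
    -- invariance of ρ under each homoclinic automorphism S
    have hinv : ∀ S : X ≃ᵐ X, MeasurePreserving S μ μ →
        (∀ D : Set X, MeasurableSet D →
          Tendsto (fun n => μ (D ∆ ((fun x => (Ti n).symm (S (Ti n x))) '' D))) atTop (nhds 0)) →
        (∀ D : Set X, MeasurableSet D →
          Tendsto (fun n => μ (D ∆ ((fun x => (Tj n).symm (S (Tj n x))) '' D))) atTop (nhds 0)) →
        ∀ D : Set X, MeasurableSet D →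
          ν ((S '' D) ×ˢ B ×ˢ C) = ν (D ×ˢ B ×ˢ C) := by
      intro S hS hSi hSj D hD
      have hSD : MeasurableSet (S '' D) := S.measurableSet_image.mpr hD
      -- error terms
      have herr : ∀ (T : ℕ → X ≃ᵐ X), (∀ n, MeasurePreserving (T n) μ μ) →
          ∀ (E : Set X), MeasurableSet E →
          (∀ n, μ (E ∆ ((fun x => (T n).symm (S (T n x))) '' E))
            = μ ((S ⁻¹' (T n '' E)) ∆ (T n '' E))) := by
        intro T hT E hE n
        have h1 : ((fun x => (T n).symm (S (T n x))) '' E)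
            = (T n) ⁻¹' (S.symm ⁻¹' (T n '' E)) := by
          ext x
          simp only [Set.mem_image, Set.mem_preimage]
          constructor
          · rintro ⟨y, hy, rfl⟩
            exact ⟨y, hy, by simp⟩
          · rintro ⟨y, hy, hxy⟩
            refine ⟨y, hy, ?_⟩
            rw [hxy]
            simp
        have h2 : E = (T n) ⁻¹' (T n '' E) :=
          (Set.preimage_image_eq E (T n).injective).symm
        have h3 : E ∆ ((fun x => (T n).symm (S (T n x))) '' E)
            = (T n) ⁻¹' ((T n '' E) ∆ (S.symm ⁻¹' (T n '' E))) := by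
          rw [Set.preimage_symmDiff, ← h1, ← h2]
        have hTE : MeasurableSet (T n '' E) := (T n).measurableSet_image.mpr hE
        rw [h3, (hT n).measure_preimage
          (hTE.symmDiff (S.symm.measurable hTE)).nullMeasurableSet]
        -- μ ((T n '' E) ∆ (S.symm ⁻¹' (T n '' E))) = μ ((S ⁻¹' (T n '' E)) ∆ (T n '' E))
        have h4 : (S ⁻¹' (T n '' E)) ∆ (T n '' E)
            = S ⁻¹' ((T n '' E) ∆ (S.symm ⁻¹' (T n '' E))) := by
          rw [Set.preimage_symmDiff]
          congr 1
          ext x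
          simp
        rw [h4, hS.measure_preimage
          (hTE.symmDiff (S.symm.measurable hTE)).nullMeasurableSet]
      have herr1 : Tendsto (fun n => μ ((S ⁻¹' (Ti n '' B)) ∆ (Ti n '' B))) atTop (nhds 0) := by
        have := hSi B hB
        simpa only [herr Ti hTi B hB] using this
      have herr2 : Tendsto (fun n => μ ((S ⁻¹' (Tj n '' C)) ∆ (Tj n '' C))) atTop (nhds 0) := by
        have := hSj C hC
        simpa only [herr Tj hTj C hC] using this
      -- rewrite the shifted term
      have hrw : ∀ p : ℕ × ℕ, μ (S '' D ∩ Ti p.1 '' B ∩ Tj p.2 '' C)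
          = μ (D ∩ S ⁻¹' (Ti p.1 '' B) ∩ S ⁻¹' (Tj p.2 '' C)) := by
        intro p
        have himg : S '' D ∩ Ti p.1 '' B ∩ Tj p.2 '' C
            = S '' (D ∩ S ⁻¹' (Ti p.1 '' B) ∩ S ⁻¹' (Tj p.2 '' C)) := by
          rw [Set.image_inter S.injective, Set.image_inter S.injective,
            Set.image_preimage_eq _ S.surjective, Set.image_preimage_eq _ S.surjective]
        have hmeas : MeasurableSet (D ∩ S ⁻¹' (Ti p.1 '' B) ∩ S ⁻¹' (Tj p.2 '' C)) :=
          (hD.inter (S.measurable ((Ti p.1).measurableSet_image.mpr hB))).inter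
            (S.measurable ((Tj p.2).measurableSet_image.mpr hC))
        rw [himg, S.image_eq_preimage_symm,
          (hS.symm S).measure_preimage hmeas.nullMeasurableSet]
      -- the error sequence
      set e : ℕ × ℕ → ℝ≥0∞ := fun p =>
        μ ((S ⁻¹' (Ti p.1 '' B)) ∆ (Ti p.1 '' B)) + μ ((S ⁻¹' (Tj p.2 '' C)) ∆ (Tj p.2 '' C))
        with he
      have hetend : Tendsto e (atTop ×ˢ atTop) (nhds 0) := by
        have h1 : Tendsto (fun p : ℕ × ℕ => μ ((S ⁻¹' (Ti p.1 '' B)) ∆ (Ti p.1 '' B)))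
            (atTop ×ˢ atTop) (nhds 0) := herr1.comp tendsto_fst
        have h2 : Tendsto (fun p : ℕ × ℕ => μ ((S ⁻¹' (Tj p.2 '' C)) ∆ (Tj p.2 '' C)))
            (atTop ×ˢ atTop) (nhds 0) := herr2.comp tendsto_snd
        simpa using h1.add h2
      set g : ℕ × ℕ → ℝ≥0∞ := fun p => μ (D ∩ Ti p.1 '' B ∩ Tj p.2 '' C) with hg
      have hgtend := hlim D B C hD hB hC
      have hLne : ν (D ×ˢ B ×ˢ C) ≠ ⊤ := by
        rw [← hρ D hD]; exact measure_ne_top ρ D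
      have hlow : Tendsto (fun p => g p - e p) (atTop ×ˢ atTop)
          (nhds (ν (D ×ˢ B ×ˢ C))) := by
        have := ENNReal.Tendsto.sub hgtend hetend (Or.inl hLne)
        simpa using this
      have hup : Tendsto (fun p => g p + e p) (atTop ×ˢ atTop)
          (nhds (ν (D ×ˢ B ×ˢ C))) := by
        have := hgtend.add hetend
        simpa using this
      have hmain : Tendsto (fun p : ℕ × ℕ => μ (S '' D ∩ Ti p.1 '' B ∩ Tj p.2 '' C))
          (atTop ×ˢ atTop) (nhds (ν (D ×ˢ B ×ˢ C))) := by
        refine tendsto_of_tendsto_of_tendsto_of_le_of_le hlow hup ?_ ?_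
        · intro p
          dsimp only
          rw [hrw p]
          refine tsub_le_iff_right.mpr ?_
          have := stmt11_aux_inter_le μ D (S ⁻¹' (Ti p.1 '' B)) (S ⁻¹' (Tj p.2 '' C))
            (Ti p.1 '' B) (Tj p.2 '' C)
          calc g p ≤ μ (D ∩ S ⁻¹' (Ti p.1 '' B) ∩ S ⁻¹' (Tj p.2 '' C))
              + (μ ((Ti p.1 '' B) ∆ (S ⁻¹' (Ti p.1 '' B)))
                + μ ((Tj p.2 '' C) ∆ (S ⁻¹' (Tj p.2 '' C)))) := this
            _ = μ (D ∩ S ⁻¹' (Ti p.1 '' B) ∩ S ⁻¹' (Tj p.2 '' C)) + e p := by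
                rw [he]; dsimp only; rw [symmDiff_comm (Ti p.1 '' B),
                  symmDiff_comm (Tj p.2 '' C)]
        · intro p
          dsimp only
          rw [hrw p]
          exact stmt11_aux_inter_le μ D (Ti p.1 '' B) (Tj p.2 '' C)
            (S ⁻¹' (Ti p.1 '' B)) (S ⁻¹' (Tj p.2 '' C))
      exact tendsto_nhds_unique (hlim (S '' D) B C hSD hB hC) hmain
    -- Radon–Nikodym derivative
    set f : X → ℝ≥0∞ := ρ.rnDeriv μ with hfdef
    have hfmeas : Measurable f := Measure.measurable_rnDeriv ρ μ
    have hρd : μ.withDensity f = ρ := Measure.withDensity_rnDeriv_eq ρ μ hρac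
    have hint : ∫⁻ x, f x ∂μ = c := by
      rw [hfdef, Measure.lintegral_rnDeriv hρac, hρ univ MeasurableSet.univ,
        hprod B C hB hC]
    -- invariance of f under homoclinic automorphisms, a.e.
    have hfS : ∀ S : X ≃ᵐ X, MeasurePreserving S μ μ →
        (∀ D : Set X, MeasurableSet D →
          Tendsto (fun n => μ (D ∆ ((fun x => (Ti n).symm (S (Ti n x))) '' D))) atTop (nhds 0)) →
        (∀ D : Set X, MeasurableSet D →
          Tendsto (fun n => μ (D ∆ ((fun x => (Tj n).symm (S (Tj n x))) '' D))) atTop (nhds 0)) →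
        (fun x => f (S.symm x)) =ᵐ[μ] f := by
      intro S hS hSi hSj
      have hmapρ : ρ.map S = ρ := by
        ext s hs
        rw [Measure.map_apply S.measurable hs, hρ _ (S.measurable hs), hρ s hs]
        have himg : S '' (S ⁻¹' s) = s := Set.image_preimage_eq _ S.surjective
        have h := hinv S hS hSi hSj (S ⁻¹' s) (S.measurable hs)
        rw [himg] at h
        exact h.symm
      have hmapμ : μ.map S = μ := hS.map_eq
      have hrd := (S.measurableEmbedding).rnDeriv_map ρ μ
      simp only [hmapρ, hmapμ] at hrd
      -- hrd : (fun x => ρ.rnDeriv μ (S x)) =ᵐ[μ] ρ.rnDeriv μ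
      have hq : Measure.QuasiMeasurePreserving S.symm μ μ :=
        (hS.symm S).quasiMeasurePreserving
      have := hq.ae_eq_comp hrd
      -- this : (fun x => f (S x)) ∘ S.symm =ᵐ[μ] f ∘ S.symm
      have heq : ((fun x => f (S x)) ∘ ⇑S.symm) = f := by
        funext x; simp [Function.comp]
      rw [heq] at this
      exact this.symm
    -- dichotomy for level sets of f
    have hdich : ∀ t : ℝ≥0∞, (μ {x | t < f x} = 0 ∨ μ {x | t < f x} = 1)
        ∧ (μ {x | f x < t} = 0 ∨ μ {x | f x < t} = 1) := by
      intro t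
      have hgen : ∀ G : Set ℝ≥0∞, MeasurableSet G →
          μ (f ⁻¹' G) = 0 ∨ μ (f ⁻¹' G) = 1 := by
        intro G hG
        refine herg _ (hfmeas hG) ?_
        intro S hS hSi hSj
        have hfs := hfS S hS hSi hSj
        have himg : S '' (f ⁻¹' G) = (fun x => f (S.symm x)) ⁻¹' G := by
          rw [S.image_eq_preimage_symm]; rfl
        rw [himg]
        refine measure_symmDiff_eq_zero_iff.mpr ?_
        refine eventuallyEq_set.mpr ?_
        filter_upwards [hfs] with x hx
        simp [Set.mem_preimage, hx]
      constructor
      · exact hgen (Set.Ioi t) measurableSet_Ioi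
      · exact hgen (Set.Iio t) measurableSet_Iio
    have hμ0 : (μ : Measure X) ≠ 0 := IsProbabilityMeasure.ne_zero μ
    -- f ≤ c a.e.
    have h1 : μ {x | c < f x} = 0 := by
      rcases (hdich c).1 with h | h
      · exact h
      · exfalso
        have hmeas : MeasurableSet {x | c < f x} := hfmeas measurableSet_Ioi
        have hae : ∀ᵐ x ∂μ, c < f x := by
          rw [ae_iff]
          have : {x | ¬ c < f x} = {x | c < f x}ᶜ := by ext x; simp
          rw [this, prob_compl_eq_zero_iff hmeas]
          exact h
        have hfi : ∫⁻ _ : X, c ∂μ ≠ ⊤ := by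
          simp [lintegral_const, hcne, ENNReal.mul_ne_top]
        have := lintegral_strict_mono hμ0 hfmeas.aemeasurable hfi hae
        rw [hint] at this
        simp only [lintegral_const, measure_univ, mul_one] at this
        exact lt_irrefl c this
    -- f ≥ c a.e.
    have h2 : μ {x | f x < c} = 0 := by
      rcases (hdich c).2 with h | h
      · exact h
      · exfalso
        have hmeas : MeasurableSet {x | f x < c} := hfmeas measurableSet_Iio
        have hae : ∀ᵐ x ∂μ, f x < c := by
          rw [ae_iff]
          have : {x | ¬ f x < c} = {x | f x < c}ᶜ := by ext x; simp
          rw [this, prob_compl_eq_zero_iff hmeas]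
          exact h
        have hfi : ∫⁻ x, f x ∂μ ≠ ⊤ := by rw [hint]; exact hcne
        have := lintegral_strict_mono hμ0 aemeasurable_const hfi hae
        rw [hint] at this
        simp only [lintegral_const, measure_univ, mul_one] at this
        exact lt_irrefl c this
    have hfc : f =ᵐ[μ] fun _ => c := by
      have e1 : ∀ᵐ x ∂μ, ¬ c < f x := by rw [ae_iff]; simpa using h1
      have e2 : ∀ᵐ x ∂μ, ¬ f x < c := by rw [ae_iff]; simpa using h2
      filter_upwards [e1, e2] with x hx1 hx2
      exact le_antisymm (not_lt.mp hx1) (not_lt.mp hx2)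
    -- conclude
    calc ν (A ×ˢ B ×ˢ C) = ρ A := (hρ A hA).symm
      _ = ∫⁻ x in A, f x ∂μ := by rw [← hρd, withDensity_apply _ hA]
      _ = ∫⁻ _ in A, c ∂μ := lintegral_congr_ae (ae_restrict_of_ae hfc)
      _ = c * μ A := by simp [lintegral_const, Measure.restrict_apply_univ]
      _ = μ A * (μ B * μ C) := by rw [hc, mul_comm]
  -- now deduce equality of measures via uniqueness of product measures
  symm
  refine Measure.prod_eq fun s t hs ht => ?_
  -- measure on the last two coordinates over the slice `s`
  set σ : Measure (X × X) := Measure.map Prod.snd (ν.restrict (s ×ˢ (univ : Set (X × X))))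
    with hσdef
  have hσ : ∀ E : Set (X × X), MeasurableSet E → σ E = ν (s ×ˢ E) := by
    intro E hE
    rw [hσdef, Measure.map_apply measurable_snd hE,
      Measure.restrict_apply (measurable_snd hE)]
    congr 1
    ext ⟨x, y, z⟩
    simp [Set.mem_prod, and_comm]
  haveI : IsFiniteMeasure ((μ s) • μ) := by
    constructor
    rw [Measure.smul_apply, smul_eq_mul]
    exact ENNReal.mul_lt_top (measure_lt_top μ s) (measure_lt_top μ univ)
  have hσeq : ((μ s) • μ).prod μ = σ := by
    refine Measure.prod_eq fun B C hB hC => ?_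
    rw [hσ _ (hB.prod hC), key s B C hs hB hC, Measure.smul_apply, smul_eq_mul, mul_assoc]
  have hsmul : ∀ E : Set (X × X), MeasurableSet E →
      (((μ s) • μ).prod μ) E = μ s * (μ.prod μ) E := by
    intro E hE
    rw [Measure.prod_apply hE, Measure.prod_apply hE, lintegral_smul_measure, smul_eq_mul]
  rw [← hσ t ht, ← hσeq, hsmul t ht]
end

section
/- A measure-preserving transformation T of a probability space possessing an ergodic homoclinic group is mixing of all orders. -/
open MeasureTheory Filter Set
open scoped symmDiff ENNReal

/-- The `n`-th iterate (with `n : ℤ`) of a measurable automorphism, as a map. -/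
noncomputable def mzpow {X : Type*} [MeasurableSpace X] (T : X ≃ᵐ X) (n : ℤ) : X → X :=
  if 0 ≤ n then (⇑T)^[n.toNat] else (⇑T.symm)^[(-n).toNat]

section MzpowAPI

variable {X : Type*} [MeasurableSpace X] (T : X ≃ᵐ X)

lemma mzpow_eq (n : ℤ) : mzpow T n = ⇑(T.toEquiv ^ n) := by
  unfold mzpow
  split_ifs with h
  · obtain ⟨k, rfl⟩ := Int.eq_ofNat_of_zero_le h
    rw [zpow_natCast, Equiv.Perm.coe_pow]
    simp
  · obtain ⟨k, rfl⟩ : ∃ k : ℕ, n = -(k:ℤ) := ⟨n.natAbs, by omega⟩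
    rw [zpow_neg, zpow_natCast, ← inv_pow, Equiv.Perm.coe_pow]
    simp only [Int.toNat_neg_nat, neg_neg]
    rfl

lemma mzpow_apply_mzpow (a b : ℤ) (x : X) : mzpow T a (mzpow T b x) = mzpow T (a + b) x := by
  simp only [mzpow_eq, ← Equiv.Perm.mul_apply, ← zpow_add]

lemma mzpow_zero' : mzpow T 0 = id := by
  ext x; simp [mzpow_eq]

lemma measurable_mzpow (n : ℤ) : Measurable (mzpow T n) := by
  unfold mzpow; split_ifs
  · exact T.measurable.iterate _
  · exact T.symm.measurable.iterate _

lemma measurePreserving_mzpow {μ : Measure X} (hT : MeasurePreserving T μ μ) (n : ℤ) :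
    MeasurePreserving (mzpow T n) μ μ := by
  unfold mzpow; split_ifs
  · exact hT.iterate _
  · exact (hT.symm T).iterate _

lemma image_mzpow_eq_preimage (n : ℤ) (A : Set X) :
    mzpow T n '' A = mzpow T (-n) ⁻¹' A := by
  rw [mzpow_eq, mzpow_eq, Equiv.image_eq_preimage_symm]
  have : (T.toEquiv ^ n).symm = T.toEquiv ^ (-n) := by
    rw [zpow_neg]; rfl
  rw [this]

lemma measurableSet_image_mzpow (n : ℤ) {A : Set X} (hA : MeasurableSet A) :
    MeasurableSet (mzpow T n '' A) := by
  rw [image_mzpow_eq_preimage]; exact measurable_mzpow T _ hA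

lemma measure_image_mzpow {μ : Measure X} (hT : MeasurePreserving T μ μ) (n : ℤ)
    {A : Set X} (hA : MeasurableSet A) : μ (mzpow T n '' A) = μ A := by
  rw [image_mzpow_eq_preimage]
  exact (measurePreserving_mzpow T hT (-n)).measure_preimage hA.nullMeasurableSet

lemma mzpow_injective (n : ℤ) : Function.Injective (mzpow T n) := by
  rw [mzpow_eq]; exact (T.toEquiv ^ n).injective

lemma mzpow_image_image (a b : ℤ) (A : Set X) :
    mzpow T a '' (mzpow T b '' A) = mzpow T (a + b) '' A := by
  rw [Set.image_image]
  exact Set.image_congr' (fun x => mzpow_apply_mzpow T a b x)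

lemma mzpow_image_image_cancel (n : ℤ) (A : Set X) :
    mzpow T n '' (mzpow T (-n) '' A) = A := by
  rw [mzpow_image_image, add_neg_cancel, mzpow_zero', Set.image_id]

/-- Shifting all the exponents by a common amount does not change the measure. -/
lemma measure_iInter_mzpow_shift {ι : Type*} [Countable ι] {μ : Measure X}
    (hT : MeasurePreserving T μ μ) (c : ℤ) (n : ι → ℤ) (s : ι → Set X)
    (hs : ∀ i, MeasurableSet (s i)) :
    μ (⋂ i, mzpow T (n i + c) '' s i) = μ (⋂ i, mzpow T (n i) '' s i) := by
  have h1 : ⋂ i, mzpow T (n i + c) '' s i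
      = mzpow T (-c) ⁻¹' (⋂ i, mzpow T (n i) '' s i) := by
    rw [Set.preimage_iInter]
    apply Set.iInter_congr
    intro i
    rw [← image_mzpow_eq_preimage, mzpow_image_image, add_comm]
  rw [h1]
  exact (measurePreserving_mzpow T hT (-c)).measure_preimage
    (MeasurableSet.iInter (fun i => measurableSet_image_mzpow T _ (hs i))).nullMeasurableSet

end MzpowAPI

section UlimAPI

noncomputable def ulim (U : Ultrafilter ℕ) (g : ℕ → ℝ≥0∞) : ℝ≥0∞ :=
  (isCompact_univ.ultrafilter_le_nhds (U.map g) (by simp)).choose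

lemma tendsto_ulim (U : Ultrafilter ℕ) (g : ℕ → ℝ≥0∞) : Tendsto g U (nhds (ulim U g)) := by
  have h := (isCompact_univ.ultrafilter_le_nhds (U.map g) (by simp)).choose_spec.2
  have h2 : Filter.map g ↑U ≤ nhds (ulim U g) := by
    rw [← Ultrafilter.coe_map]; exact h
  exact h2

lemma ulim_eq {U : Ultrafilter ℕ} {g : ℕ → ℝ≥0∞} {a : ℝ≥0∞} (h : Tendsto g U (nhds a)) :
    ulim U g = a := tendsto_nhds_unique (tendsto_ulim U g) h

lemma ulim_const (U : Ultrafilter ℕ) (c : ℝ≥0∞) : ulim U (fun _ => c) = c :=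
  ulim_eq tendsto_const_nhds

lemma ulim_le_ulim {U : Ultrafilter ℕ} {g h : ℕ → ℝ≥0∞} (hle : ∀ t, g t ≤ h t) :
    ulim U g ≤ ulim U h :=
  le_of_tendsto_of_tendsto (tendsto_ulim U g) (tendsto_ulim U h) (Eventually.of_forall hle)

lemma ulim_add (U : Ultrafilter ℕ) (g h : ℕ → ℝ≥0∞) :
    ulim U (fun t => g t + h t) = ulim U g + ulim U h :=
  ulim_eq ((tendsto_ulim U g).add (tendsto_ulim U h))

end UlimAPI

section SetAPI

lemma iInter_last_split {α : Type*} {n : ℕ} (s : Fin (n+1) → Set α) :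
    ⋂ i, s i = s (Fin.last n) ∩ ⋂ i : Fin n, s i.castSucc := by
  ext x
  simp only [Set.mem_iInter, Set.mem_inter_iff]
  constructor
  · exact fun h => ⟨h _, fun i => h _⟩
  · rintro ⟨hl, hc⟩ i
    induction i using Fin.lastCases with
    | last => exact hl
    | cast i => exact hc i

lemma symmDiff_iInter_subset {ι α : Type*} (a b : ι → Set α) :
    (⋂ i, a i) ∆ (⋂ i, b i) ⊆ ⋃ i, (a i) ∆ (b i) := by
  intro x hx
  rw [Set.mem_symmDiff] at hx
  rcases hx with ⟨ha, hb⟩ | ⟨hb, ha⟩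
  · simp only [Set.mem_iInter, not_forall] at hb
    obtain ⟨i, hi⟩ := hb
    exact Set.mem_iUnion.2 ⟨i, Set.mem_symmDiff.2 (Or.inl ⟨Set.mem_iInter.1 ha i, hi⟩)⟩
  · simp only [Set.mem_iInter, not_forall] at ha
    obtain ⟨i, hi⟩ := ha
    exact Set.mem_iUnion.2 ⟨i, Set.mem_symmDiff.2 (Or.inr ⟨Set.mem_iInter.1 hb i, hi⟩)⟩

lemma inter_subset_inter_union_symmDiff {α : Type*} (s G G' : Set α) :
    s ∩ G' ⊆ (s ∩ G) ∪ (G' ∆ G) := by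
  rintro x ⟨hs, hG'⟩
  by_cases h : x ∈ G
  · exact Or.inl ⟨hs, h⟩
  · exact Or.inr (Set.mem_symmDiff.2 (Or.inl ⟨hG', h⟩))

lemma tendsto_toNat_atTop {z : ℕ → ℤ} (h : Tendsto z atTop atTop) :
    Tendsto (fun t => (z t).toNat) atTop atTop := by
  rw [Filter.tendsto_atTop_atTop] at *
  intro b
  obtain ⟨i, hi⟩ := h b
  exact ⟨i, fun a ha => by have := hi a ha; omega⟩

end SetAPI

/-- A measure-preserving transformation `T` of a probability space
whose homoclinic group `H(T) = {S : TⁿST⁻ⁿ → Id}` acts ergodically is mixing of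
all orders: for sets `A_0, …, A_r` and times `0 = n_0, n_1, …, n_r` whose
successive gaps tend to infinity,
`μ(T^{n_0}A_0 ∩ … ∩ T^{n_r}A_r) → μ(A_0)⋯μ(A_r)`. -/
theorem stmt12 {X : Type*} [MeasurableSpace X] (μ : Measure X)
    [IsProbabilityMeasure μ] (T : X ≃ᵐ X) (hT : MeasurePreserving T μ μ)
    -- the homoclinic group of `T` is ergodic
    (herg : ∀ A : Set X, MeasurableSet A →
      (∀ S : X ≃ᵐ X, MeasurePreserving S μ μ →
        (∀ B : Set X, MeasurableSet B →
          Tendsto (fun n : ℕ =>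
            μ (B ∆ ((fun x => mzpow T (n : ℤ) (S (mzpow T (-(n : ℤ)) x))) '' B)))
            atTop (nhds 0)) →
        μ ((S '' A) ∆ A) = 0) →
      μ A = 0 ∨ μ A = 1) :
    ∀ (r : ℕ) (A : Fin (r + 1) → Set X), (∀ i, MeasurableSet (A i)) →
      ∀ m : ℕ → Fin (r + 1) → ℤ, (∀ t, m t 0 = 0) →
      (∀ i : Fin r, Tendsto (fun t => m t i.succ - m t i.castSucc) atTop atTop) →
      Tendsto (fun t => μ (⋂ i, mzpow T (m t i) '' A i)) atTop
        (nhds (∏ i, μ (A i))) := by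
  intro r
  induction r with
  | zero =>
    intro A hA m hm0 _
    have hfun : ∀ t, (⋂ i, mzpow T (m t i) '' A i) = A 0 := by
      intro t
      have h : ∀ i : Fin 1, mzpow T (m t i) '' A i = A 0 := by
        intro i
        have hi : i = 0 := Subsingleton.elim _ _
        rw [hi, hm0 t, mzpow_zero', Set.image_id]
      rw [Set.iInter_congr h]
      exact Set.iInter_const _
    have hprod : (∏ i, μ (A i)) = μ (A 0) := by simp [Fin.prod_univ_one]
    rw [hprod]
    have : (fun t => μ (⋂ i, mzpow T (m t i) '' A i)) = fun _ => μ (A 0) :=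
      funext fun t => by rw [hfun t]
    rw [this]
    exact tendsto_const_nhds
  | succ r ih =>
    intro A hA m hm0 hgap
    -- single-step gaps
    have step : ∀ i j : Fin (r+2), (j:ℕ) = (i:ℕ) + 1 →
        Tendsto (fun t => m t j - m t i) atTop atTop := by
      intro i j hj
      have hi : (i:ℕ) < r + 1 := by omega
      have h1 : (⟨(i:ℕ), hi⟩ : Fin (r+1)).castSucc = i := by
        apply Fin.ext; simp
      have h2 : (⟨(i:ℕ), hi⟩ : Fin (r+1)).succ = j := by
        apply Fin.ext; simp [hj]
      have h := hgap ⟨(i:ℕ), hi⟩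
      rwa [h1, h2] at h
    have key : ∀ d : ℕ, ∀ i j : Fin (r+2), (j:ℕ) = (i:ℕ) + d + 1 →
        Tendsto (fun t => m t j - m t i) atTop atTop := by
      intro d
      induction d with
      | zero => intro i j hj; exact step i j hj
      | succ d hd =>
        intro i j hj
        have hk : (i:ℕ) + d + 1 < r + 2 := by omega
        have t1 : Tendsto (fun t => m t ⟨(i:ℕ) + d + 1, hk⟩ - m t i) atTop atTop := hd i _ rfl
        have t2 : Tendsto (fun t => m t j - m t ⟨(i:ℕ) + d + 1, hk⟩) atTop atTop :=
          step _ j (by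
            have hv : ((⟨(i:ℕ) + d + 1, hk⟩ : Fin (r+2)) : ℕ) = (i:ℕ) + d + 1 := rfl
            omega)
        have hev : ∀ᶠ t in atTop, m t j - m t ⟨(i:ℕ) + d + 1, hk⟩ ≤ m t j - m t i := by
          filter_upwards [t1.eventually_ge_atTop 0] with t ht
          omega
        exact tendsto_atTop_mono' atTop hev t2
    set L : Fin (r+2) := Fin.last (r+1) with hLdef
    have hBig : ∀ i : Fin (r+1), Tendsto (fun t => m t L - m t i.castSucc) atTop atTop := by
      intro i
      refine key (r - (i:ℕ)) i.castSucc L ?_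
      have : (i:ℕ) ≤ r := Nat.lt_succ_iff.mp i.isLt
      simp only [hLdef, Fin.val_last, Fin.coe_castSucc]
      omega
    set cP : ℝ≥0∞ := ∏ i : Fin (r+1), μ (A i.castSucc) with hcP
    set G : ℕ → Set X :=
      fun t => ⋂ i : Fin (r+1), mzpow T (m t i.castSucc - m t L) '' A i.castSucc with hGdef
    have hGmeas : ∀ t, MeasurableSet (G t) :=
      fun t => MeasurableSet.iInter fun i => measurableSet_image_mzpow T _ (hA _)
    -- induction hypothesis
    have hIH : Tendsto (fun t => μ (⋂ i : Fin (r+1), mzpow T (m t i.castSucc) '' A i.castSucc))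
        atTop (nhds cP) := by
      refine ih (fun i => A i.castSucc) (fun i => hA _) (fun t i => m t i.castSucc) ?_ ?_
      · intro t
        simp only [Fin.castSucc_zero]
        exact hm0 t
      · intro i
        have h := hgap i.castSucc
        rwa [Fin.succ_castSucc] at h
    have hGlim : Tendsto (fun t => μ (G t)) atTop (nhds cP) := by
      have he : ∀ t, μ (G t)
          = μ (⋂ i : Fin (r+1), mzpow T (m t i.castSucc) '' A i.castSucc) := by
        intro t
        have h := measure_iInter_mzpow_shift T hT (m t L)
          (fun i : Fin (r+1) => m t i.castSucc - m t L) (fun i => A i.castSucc) (fun i => hA _)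
        have h2 : (⋂ i : Fin (r+1), mzpow T ((m t i.castSucc - m t L) + m t L) '' A i.castSucc)
            = ⋂ i : Fin (r+1), mzpow T (m t i.castSucc) '' A i.castSucc := by
          apply Set.iInter_congr
          intro i
          rw [sub_add_cancel]
        rw [h2] at h
        beta_reduce at h
        simp only [hGdef]
        exact h.symm
      have heq : (fun t => μ (G t))
          = fun t => μ (⋂ i : Fin (r+1), mzpow T (m t i.castSucc) '' A i.castSucc) :=
        funext he
      rw [heq]; exact hIH
    -- key identity
    have hKI : ∀ t, μ (⋂ i, mzpow T (m t i) '' A i) = μ (A L ∩ G t) := by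
      intro t
      have h1 : μ (⋂ i, mzpow T (m t i) '' A i)
          = μ (⋂ i, mzpow T (m t i - m t L) '' A i) := by
        have h := measure_iInter_mzpow_shift T hT (m t L)
          (fun i => m t i - m t L) A hA
        have h2 : (⋂ i, mzpow T ((m t i - m t L) + m t L) '' A i)
            = ⋂ i, mzpow T (m t i) '' A i := by
          apply Set.iInter_congr
          intro i
          rw [sub_add_cancel]
        rw [h2] at h
        beta_reduce at h
        exact h
      rw [h1, iInter_last_split (fun i : Fin (r+1+1) => mzpow T (m t i - m t L) '' A i)]
      have h2 : mzpow T (m t L - m t L) '' A L = A L := by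
        rw [sub_self, mzpow_zero', Set.image_id]
      rw [h2]
    -- reduce the goal
    have hprod : (∏ i, μ (A i)) = cP * μ (A L) := by
      rw [hcP, Fin.prod_univ_castSucc]
    rw [hprod]
    have hgoal : (fun t => μ (⋂ i, mzpow T (m t i) '' A i)) = fun t => μ (A L ∩ G t) :=
      funext hKI
    rw [hgoal, tendsto_iff_ultrafilter]
    intro U hU
    classical
    -- the limit "measure" along U
    set g : Set X → ℕ → ℝ≥0∞ := fun B t => μ (B ∩ G t) with hgdef
    set ν0 : Set X → ℝ≥0∞ := fun B => ulim U (g B) with hν0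
    have hg_tendsto : ∀ B, Tendsto (g B) U (nhds (ν0 B)) := fun B => tendsto_ulim U (g B)
    have hmono : ∀ B C : Set X, B ⊆ C → ν0 B ≤ ν0 C :=
      fun B C h => ulim_le_ulim (fun t => measure_mono (Set.inter_subset_inter_left _ h))
    have hle_mu : ∀ B, ν0 B ≤ μ B := by
      intro B
      have h : ν0 B ≤ ulim U (fun _ => μ B) :=
        ulim_le_ulim (fun t => measure_mono Set.inter_subset_left)
      rwa [ulim_const] at h
    have hsub : ∀ B C : Set X, ν0 (B ∪ C) ≤ ν0 B + ν0 C := by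
      intro B C
      have h1 : ∀ t, g (B ∪ C) t ≤ g B t + g C t := by
        intro t
        simp only [hgdef]
        rw [Set.union_inter_distrib_right]
        exact measure_union_le _ _
      calc ν0 (B ∪ C) ≤ ulim U (fun t => g B t + g C t) := ulim_le_ulim h1
        _ = ν0 B + ν0 C := ulim_add U _ _
    have haddt : ∀ B C : Set X, MeasurableSet C → Disjoint B C →
        ν0 (B ∪ C) = ν0 B + ν0 C := by
      intro B C hC hBC
      have h1 : g (B ∪ C) = fun t => g B t + g C t := by
        funext t
        simp only [hgdef]
        rw [Set.union_inter_distrib_right]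
        exact measure_union (hBC.mono Set.inter_subset_left Set.inter_subset_left)
          (hC.inter (hGmeas t))
      show ulim U (g (B ∪ C)) = _
      rw [h1]
      exact ulim_add U _ _
    have hempty : ν0 ∅ = 0 := by
      have h : g ∅ = fun _ => (0:ℝ≥0∞) := funext fun t => by simp [hgdef]
      show ulim U (g ∅) = 0
      rw [h, ulim_const]
    have hcount : ∀ ⦃f : ℕ → Set X⦄, (∀ i, MeasurableSet (f i)) → Pairwise (Function.onFun Disjoint f) →
        ν0 (⋃ i, f i) = ∑' i, ν0 (f i) := by
      intro f hf hdisj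
      have hfin : ∀ N : ℕ, ν0 (⋃ k, ⋃ (_ : k < N), f k) = ∑ k ∈ Finset.range N, ν0 (f k) := by
        intro N
        induction N with
        | zero => simpa using hempty
        | succ N hN =>
          have hdis : Disjoint (⋃ k, ⋃ (_ : k < N), f k) (f N) := by
            rw [Set.disjoint_left]
            intro x hx hxN
            obtain ⟨k, hk, hxk⟩ := Set.mem_iUnion₂.1 hx
            exact Set.disjoint_left.1 (hdisj (by omega : k ≠ N)) hxk hxN
          rw [Set.biUnion_lt_succ, haddt _ _ (hf N) hdis, hN, Finset.sum_range_succ]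
      have hle : ∑' i, ν0 (f i) ≤ ν0 (⋃ i, f i) := by
        rw [ENNReal.tsum_eq_iSup_nat]
        refine iSup_le fun N => ?_
        rw [← hfin N]
        exact hmono _ _ (Set.iUnion₂_subset fun k _ => Set.subset_iUnion f k)
      have hge : ν0 (⋃ i, f i) ≤ ∑' i, ν0 (f i) := by
        have htail : Tendsto (fun N => ∑' k, μ (f (k + N))) atTop (nhds 0) :=
          ENNReal.tendsto_sum_nat_add (fun i => μ (f i)) (by
            rw [← measure_iUnion hdisj hf]
            exact (measure_lt_top μ _).ne)
        have hsplit : ∀ N, ν0 (⋃ i, f i) ≤ ∑' i, ν0 (f i) + ∑' k, μ (f (k + N)) := by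
          intro N
          have hdecomp : (⋃ i, f i) = (⋃ k, ⋃ (_ : k < N), f k) ∪ ⋃ k, f (k + N) := by
            ext x
            simp only [Set.mem_iUnion, Set.mem_union]
            constructor
            · rintro ⟨i, hi⟩
              rcases lt_or_ge i N with h | h
              · exact Or.inl ⟨i, h, hi⟩
              · exact Or.inr ⟨i - N, by rwa [Nat.sub_add_cancel h]⟩
            · rintro (⟨i, _, hi⟩ | ⟨k, hk⟩)
              · exact ⟨i, hi⟩
              · exact ⟨k + N, hk⟩
          calc ν0 (⋃ i, f i) ≤ ν0 (⋃ k, ⋃ (_ : k < N), f k) + ν0 (⋃ k, f (k + N)) := by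
                rw [hdecomp]; exact hsub _ _
            _ ≤ ∑ k ∈ Finset.range N, ν0 (f k) + ∑' k, μ (f (k + N)) := by
                refine add_le_add (le_of_eq (hfin N)) ((hle_mu _).trans ?_)
                exact measure_iUnion_le _
            _ ≤ ∑' i, ν0 (f i) + ∑' k, μ (f (k + N)) := by
                exact add_le_add (ENNReal.sum_le_tsum _) le_rfl
        have hlim : Tendsto (fun N => ∑' i, ν0 (f i) + ∑' k, μ (f (k + N))) atTop
            (nhds (∑' i, ν0 (f i) + 0)) := tendsto_const_nhds.add htail
        have := ge_of_tendsto' hlim hsplit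
        rwa [add_zero] at this
      exact le_antisymm hge hle
    -- the limit measure
    set ν : Measure X := Measure.ofMeasurable (fun B _ => ν0 B) hempty
      (fun f hf hd => hcount hf hd) with hν
    have hνap : ∀ B : Set X, MeasurableSet B → ν B = ν0 B :=
      fun B hB => Measure.ofMeasurable_apply B hB
    haveI : IsFiniteMeasure ν := ⟨by
      rw [hνap univ MeasurableSet.univ]
      exact lt_of_le_of_lt (hle_mu _) (measure_lt_top μ _)⟩
    have hac : ν ≪ μ := Measure.AbsolutelyContinuous.mk (fun s hs h0 => by
      rw [hνap s hs]
      exact le_antisymm (h0 ▸ hle_mu s) zero_le)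
    set F : X → ℝ≥0∞ := ν.rnDeriv μ with hF
    have hFmeas : Measurable F := Measure.measurable_rnDeriv ν μ
    have hFint : ∀ s : Set X, ∫⁻ x in s, F x ∂μ = ν s := fun s =>
      Measure.setLIntegral_rnDeriv hac s
    -- invariance of the density under every homoclinic S
    have hSinv : ∀ S : X ≃ᵐ X, MeasurePreserving S μ μ →
        (∀ B : Set X, MeasurableSet B →
          Tendsto (fun n : ℕ =>
            μ (B ∆ ((fun x => mzpow T (n : ℤ) (S (mzpow T (-(n : ℤ)) x))) '' B)))
            atTop (nhds 0)) →
        (F ∘ ⇑S.symm) =ᵐ[μ] F := by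
      intro S hS hCS
      have hSG : Tendsto (fun t => μ ((⇑S '' G t) ∆ G t)) atTop (nhds 0) := by
        have hterm : ∀ i : Fin (r+1),
            Tendsto (fun t => μ ((⇑S '' (mzpow T (m t i.castSucc - m t L) '' A i.castSucc))
              ∆ (mzpow T (m t i.castSucc - m t L) '' A i.castSucc))) atTop (nhds 0) := by
          intro i
          have hB := hA i.castSucc
          have hn : Tendsto (fun t => (m t L - m t i.castSucc).toNat) atTop atTop :=
            tendsto_toNat_atTop (hBig i)
          have hcomp := (hCS (A i.castSucc) hB).comp hn
          refine hcomp.congr' ?_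
          filter_upwards [(hBig i).eventually_ge_atTop 0] with t ht
          set n : ℕ := (m t L - m t i.castSucc).toNat with hn'
          have hnz : m t i.castSucc - m t L = -(n : ℤ) := by omega
          rw [hnz]
          set C : Set X := mzpow T (-(n:ℤ)) '' A i.castSucc with hCdef
          have hCm : MeasurableSet C := measurableSet_image_mzpow T _ hB
          have hSC : MeasurableSet (⇑S '' C) := by
            rw [MeasurableEquiv.image_eq_preimage_symm]
            exact S.symm.measurable hCm
          have hsd : MeasurableSet ((⇑S '' C) ∆ C) :=
            (hSC.diff hCm).union (hCm.diff hSC)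
          have hchain : μ ((⇑S '' C) ∆ C)
              = μ ((A i.castSucc) ∆
                ((fun x => mzpow T (n : ℤ) (S (mzpow T (-(n : ℤ)) x))) '' A i.castSucc)) := by
            calc μ ((⇑S '' C) ∆ C)
                = μ (mzpow T (n:ℤ) '' ((⇑S '' C) ∆ C)) :=
                  (measure_image_mzpow T hT _ hsd).symm
              _ = μ ((mzpow T (n:ℤ) '' (⇑S '' C)) ∆ (mzpow T (n:ℤ) '' C)) := by
                  rw [Set.image_symmDiff (mzpow_injective T _)]
              _ = μ (((fun x => mzpow T (n : ℤ) (S (mzpow T (-(n : ℤ)) x))) '' A i.castSucc)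
                    ∆ (A i.castSucc)) := by
                  rw [hCdef, mzpow_image_image_cancel, Set.image_image, Set.image_image]
              _ = μ ((A i.castSucc) ∆
                    ((fun x => mzpow T (n : ℤ) (S (mzpow T (-(n : ℤ)) x))) '' A i.castSucc)) := by
                  rw [symmDiff_comm]
          exact hchain.symm
        have hsum := tendsto_finset_sum (Finset.univ : Finset (Fin (r+1)))
          (fun i _ => hterm i)
        rw [Finset.sum_const_zero] at hsum
        refine tendsto_of_tendsto_of_tendsto_of_le_of_le tendsto_const_nhds hsum
          (fun t => zero_le) ?_
        intro t
        have himg : ⇑S '' G t = ⋂ i : Fin (r+1),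
            ⇑S '' (mzpow T (m t i.castSucc - m t L) '' A i.castSucc) := by
          simp only [hGdef]
          exact Set.image_iInter S.toEquiv.bijective _
        calc μ ((⇑S '' G t) ∆ G t)
            ≤ μ (⋃ i : Fin (r+1),
                (⇑S '' (mzpow T (m t i.castSucc - m t L) '' A i.castSucc))
                  ∆ (mzpow T (m t i.castSucc - m t L) '' A i.castSucc)) := by
              refine measure_mono ?_
              rw [himg]
              exact symmDiff_iInter_subset _ _
          _ ≤ ∑ i : Fin (r+1), μ ((⇑S '' (mzpow T (m t i.castSucc - m t L) '' A i.castSucc))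
                  ∆ (mzpow T (m t i.castSucc - m t L) '' A i.castSucc)) := by
              refine (measure_iUnion_le _).trans ?_
              rw [tsum_fintype]
      have elim0 : ulim U (fun t => μ ((⇑S '' G t) ∆ G t)) = 0 := ulim_eq (hSG.mono_left hU)
      have hνinv : ∀ s : Set X, MeasurableSet s → ν0 (⇑S ⁻¹' s) = ν0 s := by
        intro s hs
        have h1 : g (⇑S ⁻¹' s) = fun t => μ (s ∩ (⇑S '' G t)) := by
          funext t
          simp only [hgdef]
          have himg : ⇑S '' ((⇑S ⁻¹' s) ∩ G t) = s ∩ (⇑S '' G t) := by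
            rw [Set.image_inter S.injective, Set.image_preimage_eq _ S.surjective]
          calc μ ((⇑S ⁻¹' s) ∩ G t)
              = μ (⇑S '' ((⇑S ⁻¹' s) ∩ G t)) := by
                rw [MeasurableEquiv.image_eq_preimage_symm]
                exact ((hS.symm S).measure_preimage
                  (((hs.preimage S.measurable).inter (hGmeas t)).nullMeasurableSet)).symm
            _ = μ (s ∩ (⇑S '' G t)) := by rw [himg]
        apply le_antisymm
        · have hb : ∀ t, μ (s ∩ (⇑S '' G t)) ≤ g s t + μ ((⇑S '' G t) ∆ G t) := by
            intro t
            refine (measure_mono (inter_subset_inter_union_symmDiff s (G t) (⇑S '' G t))).trans ?_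
            exact measure_union_le _ _
          calc ν0 (⇑S ⁻¹' s) = ulim U (fun t => μ (s ∩ (⇑S '' G t))) := by
                show ulim U (g (⇑S ⁻¹' s)) = _
                rw [h1]
            _ ≤ ulim U (fun t => g s t + μ ((⇑S '' G t) ∆ G t)) := ulim_le_ulim hb
            _ = ν0 s + 0 := by rw [ulim_add U _ _, elim0]
            _ = ν0 s := add_zero _
        · have hb : ∀ t, g s t ≤ μ (s ∩ (⇑S '' G t)) + μ ((⇑S '' G t) ∆ G t) := by
            intro t
            have h2 : s ∩ G t ⊆ (s ∩ (⇑S '' G t)) ∪ ((G t) ∆ (⇑S '' G t)) :=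
              inter_subset_inter_union_symmDiff s (⇑S '' G t) (G t)
            refine (measure_mono h2).trans ?_
            refine (measure_union_le _ _).trans ?_
            rw [symmDiff_comm]
          calc ν0 s ≤ ulim U (fun t => μ (s ∩ (⇑S '' G t)) + μ ((⇑S '' G t) ∆ G t)) :=
                ulim_le_ulim hb
            _ = ulim U (fun t => μ (s ∩ (⇑S '' G t))) + 0 := by rw [ulim_add U _ _, elim0]
            _ = ν0 (⇑S ⁻¹' s) := by
                rw [add_zero]
                show _ = ulim U (g (⇑S ⁻¹' s))
                rw [h1]
      -- equality of densities via withDensity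
      have hwd : μ.withDensity F = μ.withDensity (F ∘ ⇑S.symm) := by
        ext s hs
        rw [withDensity_apply _ hs, withDensity_apply _ hs]
        have hker : s.indicator (F ∘ ⇑S.symm) = fun x => ((⇑S ⁻¹' s).indicator F) (S.symm x) := by
          funext x
          simp only [Set.indicator, Function.comp, Set.mem_preimage,
            MeasurableEquiv.apply_symm_apply]
        have hcalc : ∫⁻ x in s, (F ∘ ⇑S.symm) x ∂μ = ∫⁻ x in s, F x ∂μ := by
          calc ∫⁻ x in s, (F ∘ ⇑S.symm) x ∂μ
              = ∫⁻ x, s.indicator (F ∘ ⇑S.symm) x ∂μ := (lintegral_indicator hs _).symm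
            _ = ∫⁻ x, ((⇑S ⁻¹' s).indicator F) (S.symm x) ∂μ := by rw [hker]
            _ = ∫⁻ x, ((⇑S ⁻¹' s).indicator F) x ∂μ :=
                (hS.symm S).lintegral_comp (hFmeas.indicator (hs.preimage S.measurable))
            _ = ∫⁻ x in (⇑S ⁻¹' s), F x ∂μ := lintegral_indicator (hs.preimage S.measurable) _
            _ = ν (⇑S ⁻¹' s) := hFint _
            _ = ν s := by
                rw [hνap _ (hs.preimage S.measurable), hνap s hs]
                exact hνinv s hs
            _ = ∫⁻ x in s, F x ∂μ := (hFint s).symm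
        rw [hcalc]
      have hfin : ∫⁻ x, F x ∂μ ≠ ⊤ := by
        have h := hFint univ
        rw [setLIntegral_univ] at h
        rw [h]
        exact measure_ne_top ν univ
      exact ((withDensity_eq_iff hFmeas.aemeasurable
        (hFmeas.comp S.symm.measurable).aemeasurable hfin).1 hwd).symm
    -- level sets of F are homoclinic-invariant, hence trivial
    have htriv : ∀ c : ℝ≥0∞, μ {x | c < F x} = 0 ∨ μ {x | c < F x} = 1 := by
      intro c
      apply herg _ (hFmeas measurableSet_Ioi)
      intro S hS hCS
      have hfs := hSinv S hS hCS
      have hnull : μ {x | ¬ F (S.symm x) = F x} = 0 := by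
        have h : ∀ᵐ x ∂μ, F (S.symm x) = F x := hfs
        exact ae_iff.1 h
      refine measure_mono_null ?_ hnull
      intro x hx
      rw [Set.mem_symmDiff] at hx
      rcases hx with ⟨hxS, hxE⟩ | ⟨hxE, hxS⟩
      · obtain ⟨y, hy, hyx⟩ := hxS
        intro heq
        apply hxE
        have hsy : S.symm x = y := by rw [← hyx, MeasurableEquiv.symm_apply_apply]
        show c < F x
        rw [← heq, hsy]
        exact hy
      · intro heq
        apply hxS
        refine ⟨S.symm x, ?_, MeasurableEquiv.apply_symm_apply S x⟩
        show c < F (S.symm x)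
        rw [heq]
        exact hxE
    set c0 : ℝ≥0∞ := sInf {c | μ {x | c < F x} = 0} with hc0
    have h1 : ∀ c, c0 < c → μ {x | c < F x} = 0 := by
      intro c hc
      obtain ⟨c', hc', hlt⟩ := sInf_lt_iff.1 hc
      exact measure_mono_null (fun x hx => lt_trans hlt hx) hc'
    have h2 : ∀ c, c < c0 → μ {x | c < F x} = 1 := by
      intro c hc
      rcases htriv c with h | h
      · exact absurd (sInf_le (show c ∈ {c | μ {x | c < F x} = 0} from h)) (not_le.2 hc)
      · exact h
    have hcompl_null : ∀ c, c < c0 → μ {x | F x ≤ c} = 0 := by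
      intro c hc
      have hmeq : {x | F x ≤ c} = {x | c < F x}ᶜ := by
        ext x; simp [not_lt]
      rw [hmeq, measure_compl (show MeasurableSet {x | c < F x} from hFmeas measurableSet_Ioi)
        (measure_ne_top μ _), h2 c hc, measure_univ, tsub_self]
    have hconst : F =ᵐ[μ] fun _ => c0 := by
      rw [Filter.EventuallyEq, ae_iff]
      have hupper : μ {x | c0 < F x} = 0 := by
        by_cases htop : c0 = ⊤
        · have hem : {x | c0 < F x} = ∅ := by
            ext x
            simp only [Set.mem_setOf_eq, Set.mem_empty_iff_false, iff_false, htop]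
            exact not_top_lt
          rw [hem, measure_empty]
        · have hcover : {x | c0 < F x} ⊆ ⋃ k : ℕ, {x | c0 + ((k:ℝ≥0∞))⁻¹ < F x} := by
            intro x hx
            have hne : F x - c0 ≠ 0 := by
              rw [Ne, tsub_eq_zero_iff_le]
              exact not_le.2 hx
            obtain ⟨k, hk⟩ := ENNReal.exists_inv_nat_lt hne
            refine Set.mem_iUnion.2 ⟨k, ?_⟩
            have h := ENNReal.add_lt_add_left htop hk
            rwa [add_tsub_cancel_of_le hx.le] at h
          refine measure_mono_null hcover (measure_iUnion_null fun k => ?_)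
          refine h1 _ (ENNReal.lt_add_right htop ?_)
          simp
      have hlower : μ {x | F x < c0} = 0 := by
        by_cases h0 : c0 = 0
        · refine measure_mono_null (fun x hx => ?_) measure_empty
          rw [h0] at hx
          exact absurd hx (by simp)
        · by_cases htop : c0 = ⊤
          · have hcover : {x | F x < c0} ⊆ ⋃ k : ℕ, {x | F x ≤ (k:ℝ≥0∞)} := by
              intro x hx
              have hxt : F x ≠ ⊤ := by
                rw [htop] at hx
                exact hx.ne
              obtain ⟨k, hk⟩ := ENNReal.exists_nat_gt hxt
              exact Set.mem_iUnion.2 ⟨k, hk.le⟩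
            refine measure_mono_null hcover (measure_iUnion_null fun k => ?_)
            exact hcompl_null _ (htop ▸ ENNReal.natCast_lt_top k)
          · have hcover : {x | F x < c0} ⊆ ⋃ k : ℕ, {x | F x ≤ c0 - ((k:ℝ≥0∞))⁻¹} := by
              intro x hx
              have hne : c0 - F x ≠ 0 := by
                rw [Ne, tsub_eq_zero_iff_le]
                exact not_le.2 hx
              obtain ⟨k, hk⟩ := ENNReal.exists_inv_nat_lt hne
              refine Set.mem_iUnion.2 ⟨k, ?_⟩
              have h3 : c0 - (c0 - F x) ≤ c0 - ((k:ℝ≥0∞))⁻¹ := tsub_le_tsub_left hk.le c0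
              rwa [ENNReal.sub_sub_cancel htop hx.le] at h3
            refine measure_mono_null hcover (measure_iUnion_null fun k => ?_)
            refine hcompl_null _ (ENNReal.sub_lt_self htop h0 ?_)
            simp
      refine measure_mono_null (fun x hx => ?_) (measure_union_null hupper hlower)
      rcases (Ne.lt_or_gt (hx : ¬ F x = c0)) with h | h
      · exact Or.inr h
      · exact Or.inl h
    have hνeq : ∀ s : Set X, MeasurableSet s → ν s = c0 * μ s := by
      intro s hs
      rw [← hFint s]
      calc ∫⁻ x in s, F x ∂μ = ∫⁻ _ in s, c0 ∂μ :=
            lintegral_congr_ae (ae_restrict_of_ae hconst)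
        _ = c0 * μ s := setLIntegral_const s c0
    have hc0P : c0 = cP := by
      have hA1 : ν univ = c0 := by
        rw [hνeq univ MeasurableSet.univ, measure_univ, mul_one]
      have hA2 : ν univ = cP := by
        rw [hνap univ MeasurableSet.univ]
        apply ulim_eq
        have hgu : g univ = fun t => μ (G t) := funext fun t => by simp [hgdef]
        show Tendsto (g univ) U (nhds cP)
        rw [hgu]
        exact hGlim.mono_left hU
      rw [← hA1, hA2]
    have hfinal : Tendsto (fun t => μ (A L ∩ G t)) U (nhds (ν0 (A L))) := hg_tendsto (A L)
    have hval : ν0 (A L) = cP * μ (A L) := by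
      rw [← hνap _ (hA L), hνeq _ (hA L), hc0P]
    rwa [hval] at hfinal
end

section
/- Let T be a mixing measure-preserving transformation of an infinite σ-finite measure space (X, μ). If S is a measure-preserving automorphism whose support has finite measure (μ{x : Sx ≠ x} < ∞), then S belongs to the homoclinic group of T, i.e., μ(A Δ T^nST^{-n}A) → 0 as n → ∞ for every finite measure set A. -/
open MeasureTheory Filter Set
open scoped symmDiff ENNReal

lemma mzpow_leftInv {X : Type*} [MeasurableSpace X] (T : X ≃ᵐ X) (k : ℤ) :
    Function.LeftInverse (mzpow T (-k)) (mzpow T k) := by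
  rcases lt_trichotomy k 0 with h | rfl | h
  · have h1 : ¬ (0 ≤ k) := not_le.2 h
    have h2 : (0 : ℤ) ≤ -k := by omega
    simp only [mzpow, if_neg h1, if_pos h2]
    exact Function.LeftInverse.iterate T.apply_symm_apply _
  · simp [mzpow, Function.LeftInverse]
  · have h1 : (0 : ℤ) ≤ k := le_of_lt h
    have h2 : ¬ ((0 : ℤ) ≤ -k) := by omega
    simp only [mzpow, if_pos h1, if_neg h2, neg_neg]
    exact Function.LeftInverse.iterate T.symm_apply_apply _

lemma mzpow_rightInv {X : Type*} [MeasurableSpace X] (T : X ≃ᵐ X) (k : ℤ) :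
    Function.RightInverse (mzpow T (-k)) (mzpow T k) := by
  have := mzpow_leftInv T (-k)
  rwa [neg_neg] at this

lemma mzpow_measurable {X : Type*} [MeasurableSpace X] (T : X ≃ᵐ X) (k : ℤ) :
    Measurable (mzpow T k) := by
  unfold mzpow; split
  · exact T.measurable.iterate _
  · exact T.symm.measurable.iterate _

lemma mzpow_mp {X : Type*} [MeasurableSpace X] {μ : Measure X} (T : X ≃ᵐ X)
    (hT : MeasurePreserving T μ μ) (k : ℤ) : MeasurePreserving (mzpow T k) μ μ := by
  unfold mzpow; split
  · exact hT.iterate _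
  · exact (MeasurePreserving.symm T hT).iterate _

/-- If `T` is a mixing measure-preserving automorphism of an
infinite σ-finite measure space and `S` is a measure-preserving automorphism
whose support `{x : Sx ≠ x}` has finite measure, then `S` is homoclinic for `T`:
`μ(A ∆ TⁿST⁻ⁿA) → 0` for every finite measure set `A`. -/
theorem stmt13 {X : Type*} [MeasurableSpace X] (μ : Measure X) [SigmaFinite μ]
    (hinf : μ univ = ∞) (T : X ≃ᵐ X) (hT : MeasurePreserving T μ μ)
    (hmix : ∀ A B : Set X, MeasurableSet A → MeasurableSet B → μ A < ∞ → μ B < ∞ →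
      Tendsto (fun m : ℤ => μ (A ∩ mzpow T m '' B)) cofinite (nhds 0))
    (S : X ≃ᵐ X) (hS : MeasurePreserving S μ μ)
    (hsupp : μ {x | S x ≠ x} < ∞) :
    ∀ A : Set X, MeasurableSet A → μ A < ∞ →
      Tendsto (fun n : ℕ =>
        μ (A ∆ ((fun x => mzpow T (n : ℤ) (S (mzpow T (-(n : ℤ)) x))) '' A)))
        atTop (nhds 0) := by
  intro A hA hAfin
  -- measurable hull of the support
  set C : Set X := toMeasurable μ {x | S x ≠ x} with hCdef
  have hC : MeasurableSet C := measurableSet_toMeasurable _ _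
  have hCfin : μ C < ∞ := by
    rw [hCdef, measure_toMeasurable]; exact hsupp
  have hCsub : {x | S x ≠ x} ⊆ C := subset_toMeasurable _ _
  -- the conjugated maps and their inverses
  set f : ℕ → X → X := fun n x => mzpow T (n : ℤ) (S (mzpow T (-(n : ℤ)) x)) with hfdef
  set g : ℕ → X → X := fun n x => mzpow T (n : ℤ) (S.symm (mzpow T (-(n : ℤ)) x)) with hgdef
  have hgf : ∀ n, Function.LeftInverse (g n) (f n) := by
    intro n x
    simp only [hfdef, hgdef, mzpow_leftInv T (n : ℤ) _, MeasurableEquiv.symm_apply_apply,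
      mzpow_rightInv T (n : ℤ) _]
  have hfg : ∀ n, Function.RightInverse (g n) (f n) := by
    intro n x
    simp only [hfdef, hgdef, mzpow_leftInv T (n : ℤ) _, MeasurableEquiv.apply_symm_apply,
      mzpow_rightInv T (n : ℤ) _]
  have hgmp : ∀ n, MeasurePreserving (g n) μ μ := fun n =>
    (mzpow_mp T hT _).comp ((MeasurePreserving.symm S hS).comp (mzpow_mp T hT _))
  -- the moved support
  set Cn : ℕ → Set X := fun n => mzpow T (n : ℤ) '' C with hCndef
  have hCn_pre : ∀ n, Cn n = mzpow T (-(n : ℤ)) ⁻¹' C := fun n =>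
    congrFun (Set.image_eq_preimage_of_inverse (mzpow_leftInv T _) (mzpow_rightInv T _)) C
  have hCnmeas : ∀ n, MeasurableSet (Cn n) := fun n => by
    rw [hCn_pre]; exact (mzpow_measurable T _) hC
  -- f n is the identity off Cn n
  have hfid : ∀ n x, x ∉ Cn n → f n x = x := by
    intro n x hx
    rw [hCn_pre] at hx
    have : S (mzpow T (-(n : ℤ)) x) = mzpow T (-(n : ℤ)) x := by
      by_contra h
      exact hx (hCsub h)
    simp only [hfdef, this, mzpow_rightInv T (n : ℤ) x]
  -- key inclusion
  have hincl : ∀ n, A ∆ (f n '' A) ⊆ (A ∩ Cn n) ∪ f n '' (A ∩ Cn n) := by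
    intro n x hx
    rcases hx with ⟨hxA, hxf⟩ | ⟨hxf, hxA⟩
    · left
      refine ⟨hxA, ?_⟩
      by_contra h
      exact hxf ⟨x, hxA, hfid n x h⟩
    · obtain ⟨y, hyA, rfl⟩ := hxf
      right
      refine ⟨y, ⟨hyA, ?_⟩, rfl⟩
      by_contra h
      rw [hfid n y h] at hxA
      exact hxA hyA
  -- measure of image
  have himg : ∀ n, μ (f n '' (A ∩ Cn n)) = μ (A ∩ Cn n) := by
    intro n
    rw [Set.image_eq_preimage_of_inverse (hgf n) (hfg n)]
    exact (hgmp n).measure_preimage ((hA.inter (hCnmeas n)).nullMeasurableSet)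
  -- the bound
  have hbound : ∀ n, μ (A ∆ (f n '' A)) ≤ μ (A ∩ Cn n) + μ (A ∩ Cn n) := by
    intro n
    calc μ (A ∆ (f n '' A)) ≤ μ ((A ∩ Cn n) ∪ f n '' (A ∩ Cn n)) :=
          measure_mono (hincl n)
      _ ≤ μ (A ∩ Cn n) + μ (f n '' (A ∩ Cn n)) := measure_union_le _ _
      _ = μ (A ∩ Cn n) + μ (A ∩ Cn n) := by rw [himg n]
  -- mixing gives the tendsto
  have hcast : Tendsto (fun n : ℕ => (n : ℤ)) atTop cofinite := by
    rw [← Nat.cofinite_eq_atTop]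
    exact Function.Injective.tendsto_cofinite (fun a b h => by exact_mod_cast h)
  have hmix' : Tendsto (fun n : ℕ => μ (A ∩ Cn n)) atTop (nhds 0) :=
    (hmix A C hA hC hAfin hCfin).comp hcast
  have hsum : Tendsto (fun n : ℕ => μ (A ∩ Cn n) + μ (A ∩ Cn n)) atTop (nhds 0) := by
    have := Tendsto.add hmix' hmix'
    simpa using this
  exact tendsto_of_tendsto_of_tendsto_of_le_of_le tendsto_const_nhds hsum
    (fun n => zero_le) hbound
end
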